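/- Let a, b, c, d ∈ ℂ, all nonzero, satisfy conj(c)·a + conj(b)·d = 0, conj(a)·b + conj(d)·c = 0, conj(a)·d + conj(d)·a + conj(b)·c + conj(c)·b = 0, and |a|² + |b|² + |c|² + |d|² = 1. Then there exist real numbers θ, φ and a sign ε ∈ {+1, −1} such that a = e^{iθ} e^{iφ}/2, b = e^{iθ}/2, c = ε e^{iθ}/2, and d = −ε e^{iθ} e^{iφ}/2. -/

import Mathlib

lemma half_param (a b : ℂ) (hA : ‖a‖ = 1/2) (hB : ‖b‖ = 1/2) :
    ∃ θ φ : ℝ, a = Complex.exp (θ * Complex.I) * Complex.exp (φ * Complex.I) / 2 ∧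
      b = Complex.exp (θ * Complex.I) / 2 := by
  refine ⟨b.arg, a.arg - b.arg, ?_, ?_⟩
  · have hmul : Complex.exp ((b.arg : ℂ) * Complex.I) * Complex.exp (((a.arg - b.arg : ℝ) : ℂ) * Complex.I)
        = Complex.exp ((a.arg : ℂ) * Complex.I) := by
      rw [← Complex.exp_add]; congr 1; push_cast; ring
    rw [hmul]
    have h := Complex.norm_mul_exp_arg_mul_I a
    rw [hA] at h
    conv_lhs => rw [← h]
    push_cast; ring
  · have h := Complex.norm_mul_exp_arg_mul_I b
    rw [hB] at h
    conv_lhs => rw [← h]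
    push_cast; ring

lemma abs_eq_of_normSq_eq {a b : ℂ} (h : Complex.normSq a = Complex.normSq b) :
    ‖a‖ = ‖b‖ := by
  rw [Complex.norm_def, Complex.norm_def, h]

/-- Every solution with all coefficients nonzero of the unitarity conditions for the
generating set `(1, 5, 2, 4)` of `ℤ/6ℤ` (whose Cayley graph is the Johnson graph
`J(4,2)`) is, up to a global phase `e^{iθ}`, of the form `a = e^{iθ} e^{iφ}/2`,
`b = e^{iθ}/2`, `c = ε e^{iθ}/2`, `d = −ε e^{iθ} e^{iφ}/2` with `ε ∈ {+1, −1}`. -/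
theorem johnson_J42_coefficients_classification (a b c d : ℂ)
    (ha : a ≠ 0) (hb : b ≠ 0) (hc : c ≠ 0) (hd : d ≠ 0)
    (h1 : (starRingEnd ℂ) c * a + (starRingEnd ℂ) b * d = 0)
    (h2 : (starRingEnd ℂ) a * b + (starRingEnd ℂ) d * c = 0)
    (h3 : (starRingEnd ℂ) a * d + (starRingEnd ℂ) d * a
        + (starRingEnd ℂ) b * c + (starRingEnd ℂ) c * b = 0)
    (h4 : ‖a‖ ^ 2 + ‖b‖ ^ 2
        + ‖c‖ ^ 2 + ‖d‖ ^ 2 = 1) :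
    ∃ θ φ ε : ℝ, (ε = 1 ∨ ε = -1) ∧
      a = Complex.exp (θ * Complex.I) * Complex.exp (φ * Complex.I) / 2 ∧
      b = Complex.exp (θ * Complex.I) / 2 ∧
      c = (ε : ℂ) * Complex.exp (θ * Complex.I) / 2 ∧
      d = -(ε : ℂ) * Complex.exp (θ * Complex.I) * Complex.exp (φ * Complex.I) / 2 := by
  have hb' : (starRingEnd ℂ) b ≠ 0 := by simpa using hb
  have hc' : (starRingEnd ℂ) c ≠ 0 := by simpa using hc
  have e2 : (starRingEnd ℂ) b * a + (starRingEnd ℂ) c * d = 0 := by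
    have h := congrArg (starRingEnd ℂ) h2
    simp only [map_add, map_mul, Complex.conj_conj, map_zero] at h
    linear_combination h
  have k1 : d = a ∨ d = -a := by
    have hk : (starRingEnd ℂ) b * (starRingEnd ℂ) c * ((a - d) * (a + d)) = 0 := by
      linear_combination (starRingEnd ℂ) b * a * h1 - (starRingEnd ℂ) b * d * e2
    rcases mul_eq_zero.mp hk with h | h
    · rcases mul_eq_zero.mp h with h' | h'
      · exact absurd h' hb'
      · exact absurd h' hc'
    · rcases mul_eq_zero.mp h with h' | h'
      · exact Or.inl (sub_eq_zero.mp h').symm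
      · exact Or.inr (eq_neg_of_add_eq_zero_right h')
  have k2 : c = b ∨ c = -b := by
    have hk : (((starRingEnd ℂ) b - (starRingEnd ℂ) c) * ((starRingEnd ℂ) b + (starRingEnd ℂ) c))
        * (d * d) = 0 := by
      linear_combination (starRingEnd ℂ) b * d * h1 - (starRingEnd ℂ) c * d * e2
    have hdd : d * d ≠ 0 := mul_ne_zero hd hd
    rcases mul_eq_zero.mp hk with h | h
    · rcases mul_eq_zero.mp h with h' | h'
      · left
        have h'' := sub_eq_zero.mp h'
        have h3 := congrArg (starRingEnd ℂ) h''
        simpa [Complex.conj_conj] using h3.symm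
      · right
        have h'' : (starRingEnd ℂ) c = -(starRingEnd ℂ) b := eq_neg_of_add_eq_zero_right h'
        have h3 := congrArg (starRingEnd ℂ) h''
        simpa [Complex.conj_conj] using h3
    · exact absurd h hdd
  rcases k2 with hcb | hcb <;> rcases k1 with hda | hda
  · -- c = b, d = a : contradiction
    exfalso
    have hcc : (starRingEnd ℂ) c = (starRingEnd ℂ) b := by rw [hcb]
    have hk : (2 : ℂ) * ((starRingEnd ℂ) b * a) = 0 := by
      linear_combination h1 - a * hcc - (starRingEnd ℂ) b * hda
    rcases mul_eq_zero.mp hk with h | h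
    · norm_num at h
    · rcases mul_eq_zero.mp h with h' | h'
      · exact hb' h'
      · exact ha h'
  · -- c = b, d = -a : ε = 1
    have hcc : (starRingEnd ℂ) c = (starRingEnd ℂ) b := by rw [hcb]
    have hdc : (starRingEnd ℂ) d = -((starRingEnd ℂ) a) := by rw [hda, map_neg]
    have hn : Complex.normSq a = Complex.normSq b := by
      have hC : (Complex.normSq a : ℂ) = (Complex.normSq b : ℂ) := by
        rw [← Complex.mul_conj, ← Complex.mul_conj]
        linear_combination (-1/2 : ℂ) * h3 + (1/2 : ℂ) * (starRingEnd ℂ) a * hda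
          + (1/2 : ℂ) * a * hdc + (1/2 : ℂ) * (starRingEnd ℂ) b * hcb + (1/2 : ℂ) * b * hcc
      exact_mod_cast hC
    have hAB := abs_eq_of_normSq_eq hn
    have hA : ‖a‖ = 1/2 := by
      rw [hcb, hda] at h4
      simp only [norm_neg] at h4
      rw [hAB] at h4
      nlinarith [norm_nonneg b]
    have hB : ‖b‖ = 1/2 := by rw [← hAB]; exact hA
    obtain ⟨θ, φ, hea, heb⟩ := half_param a b hA hB
    exact ⟨θ, φ, 1, Or.inl rfl, hea, heb, by rw [hcb, heb]; push_cast; ring,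
      by rw [hda, hea]; push_cast; ring⟩
  · -- c = -b, d = a : ε = -1
    have hcc : (starRingEnd ℂ) c = -((starRingEnd ℂ) b) := by rw [hcb, map_neg]
    have hdc : (starRingEnd ℂ) d = (starRingEnd ℂ) a := by rw [hda]
    have hn : Complex.normSq a = Complex.normSq b := by
      have hC : (Complex.normSq a : ℂ) = (Complex.normSq b : ℂ) := by
        rw [← Complex.mul_conj, ← Complex.mul_conj]
        linear_combination (1/2 : ℂ) * h3 - (1/2 : ℂ) * (starRingEnd ℂ) a * hda
          - (1/2 : ℂ) * a * hdc - (1/2 : ℂ) * (starRingEnd ℂ) b * hcb - (1/2 : ℂ) * b * hcc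
      exact_mod_cast hC
    have hAB := abs_eq_of_normSq_eq hn
    have hA : ‖a‖ = 1/2 := by
      rw [hcb, hda] at h4
      simp only [norm_neg] at h4
      rw [hAB] at h4
      nlinarith [norm_nonneg b]
    have hB : ‖b‖ = 1/2 := by rw [← hAB]; exact hA
    obtain ⟨θ, φ, hea, heb⟩ := half_param a b hA hB
    exact ⟨θ, φ, -1, Or.inr rfl, hea, heb, by rw [hcb, heb]; push_cast; ring,
      by rw [hda, hea]; push_cast; ring⟩
  · -- c = -b, d = -a : contradiction
    exfalso
    have hcc : (starRingEnd ℂ) c = -((starRingEnd ℂ) b) := by rw [hcb, map_neg]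
    have hk : (-2 : ℂ) * ((starRingEnd ℂ) b * a) = 0 := by
      linear_combination h1 - a * hcc - (starRingEnd ℂ) b * hda
    rcases mul_eq_zero.mp hk with h | h
    · norm_num at h
    · rcases mul_eq_zero.mp h with h' | h'
      · exact hb' h'
      · exact ha h'
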